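/- Assume x† ∈ ℓ² has finite support, satisfies the source condition K*w = x† + ηξ for some w ∈ H, η > 0 and ξ ∈ ∂‖·‖_{ℓ¹}(x†), and that K has the finite basis injectivity property. Then there exist positive constants c₁ and c₂ such that for all x ∈ ℓ¹ ∩ ℓ²: R_η(x) − R_η(x†) ≥ c₁‖x − x†‖_{ℓ²} − c₂‖K(x − x†)‖. -/

import Mathlib

noncomputable section

open Filter Topology

/-- `ℓ²(ℕ, ℝ)`. -/
abbrev ltwo : Type := lp (fun _ : ℕ => ℝ) 2

/-- `x ∈ ℓ¹`. -/
def inL1 (x : ltwo) : Prop := Memℓp (fun i => x i) 1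

/-- The `ℓ¹`-norm `‖x‖_{ℓ¹} = ∑ |xᵢ|` (junk value if `x ∉ ℓ¹`). -/
noncomputable def l1norm (x : ltwo) : ℝ := ∑' i, |x i|

/-- The functional `R_η(x) = η‖x‖₁ + ½‖x‖₂²` (finite on `ℓ¹ ∩ ℓ²`). -/
noncomputable def Rfun (η : ℝ) (x : ltwo) : ℝ := η * l1norm x + (1 / 2) * ‖x‖ ^ 2

/-- `x†` is the `R_η`-minimizing solution of `Kx = y†`: it solves the equation and
minimizes `R_η` among all solutions in `ℓ¹ ∩ ℓ²`. -/
def IsRMinSolution {H : Type*} [NormedAddCommGroup H] [InnerProductSpace ℝ H]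
    (K : ltwo →L[ℝ] H) (ydag : H) (η : ℝ) (xdag : ltwo) : Prop :=
  inL1 xdag ∧ K xdag = ydag ∧
    ∀ z : ltwo, inL1 z → K z = ydag → Rfun η xdag ≤ Rfun η z

/-- `K` has the finite basis injectivity property. -/
def FBI {H : Type*} [NormedAddCommGroup H] [InnerProductSpace ℝ H]
    (K : ltwo →L[ℝ] H) : Prop :=
  ∀ I : Finset ℕ, ∀ u v : ltwo, K u = K v →
    (∀ i ∉ I, u i = 0) → (∀ i ∉ I, v i = 0) → u = v

/-- Any `ℓ²` sequence with summable absolute values has `ℓ²`-norm at most its `ℓ¹`-norm. -/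
lemma norm_le_tsum_abs (v : ltwo) (hv : Summable fun i => |v i|) :
    ‖v‖ ≤ ∑' i, |v i| := by
  set S := ∑' i, |v i| with hS
  have hS0 : 0 ≤ S := tsum_nonneg fun i => abs_nonneg _
  have hsq : ∀ i, (v i) ^ 2 ≤ |v i| * S := by
    intro i
    have h1 : |v i| ≤ S := hv.le_tsum i fun j _ => abs_nonneg _
    rw [sq, ← abs_mul_abs_self]
    exact mul_le_mul_of_nonneg_left h1 (abs_nonneg _)
  have hsum2 : Summable fun i => (v i) ^ 2 :=
    Summable.of_nonneg_of_le (fun i => sq_nonneg _) hsq (hv.mul_right S)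
  have hnorm2 : ‖v‖ ^ 2 = ∑' i, (v i) ^ 2 := by
    rw [← real_inner_self_eq_norm_sq, lp.inner_eq_tsum]
    congr 1; funext i
    simp [RCLike.inner_apply, sq]
  have hle : ‖v‖ ^ 2 ≤ S ^ 2 := by
    rw [hnorm2]
    calc ∑' i, (v i) ^ 2 ≤ ∑' i, |v i| * S := Summable.tsum_le_tsum hsq hsum2 (hv.mul_right S)
    _ = S * S := by rw [tsum_mul_right]
    _ = S ^ 2 := by ring
  calc ‖v‖ = Real.sqrt (‖v‖ ^ 2) := (Real.sqrt_sq (norm_nonneg _)).symm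
  _ ≤ Real.sqrt (S ^ 2) := Real.sqrt_le_sqrt hle
  _ = S := Real.sqrt_sq hS0

set_option maxHeartbeats 2000000 in
theorem Rfunctional_lower_bound_sparse_source_condition
    {H : Type*} [NormedAddCommGroup H] [InnerProductSpace ℝ H] [CompleteSpace H]
    (K : ltwo →L[ℝ] H) (hFBI : FBI K)
    (xdag : ltwo) (hsparse : {i : ℕ | xdag i ≠ 0}.Finite)
    (η : ℝ) (hη : 0 < η) (w : H) (ξ : ℕ → ℝ)
    (hξ1 : ∀ i, xdag i ≠ 0 → ξ i = Real.sign (xdag i))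
    (hξ2 : ∀ i, |ξ i| ≤ 1)
    (hsource : ∀ i, (ContinuousLinearMap.adjoint K w) i = xdag i + η * ξ i) :
    ∃ c₁ > (0 : ℝ), ∃ c₂ > (0 : ℝ), ∀ x : ltwo, inL1 x →
      c₁ * ‖x - xdag‖ - c₂ * ‖K (x - xdag)‖ ≤ Rfun η x - Rfun η xdag := by
  classical
  set g : ltwo := ContinuousLinearMap.adjoint K w with hgdef
  -- the set where `|ξ|` may exceed 1/2 (off the support of xdag) is finite
  have hgsum : Summable (fun i => ‖g i‖ ^ (2:ℝ)) :=
    (memℓp_gen_iff (p := 2) (by norm_num)).mp (lp.memℓp g)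
  have hev : ∀ᶠ i in Filter.cofinite, ‖g i‖ ^ (2:ℝ) < (η/2) ^ (2:ℝ) :=
    hgsum.tendsto_cofinite_zero.eventually_lt_const
      (by positivity)
  have hSfin : {i : ℕ | ¬ ‖g i‖ < η/2}.Finite := by
    refine (Filter.eventually_cofinite.mp hev).subset ?_
    intro i hi
    simp only [Set.mem_setOf_eq, not_lt] at hi ⊢
    exact Real.rpow_le_rpow (by positivity) hi (by norm_num)
  set J : Finset ℕ := hsparse.toFinset ∪ hSfin.toFinset with hJdef
  have hJ1 : ∀ i ∉ J, xdag i = 0 := by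
    intro i hi
    by_contra hne
    exact hi (Finset.mem_union_left _ (hsparse.mem_toFinset.mpr hne))
  have hJ2 : ∀ i ∉ J, |ξ i| ≤ 1/2 := by
    intro i hi
    have h0 : xdag i = 0 := hJ1 i hi
    have hgi : ‖g i‖ < η/2 := by
      by_contra hc
      exact hi (Finset.mem_union_right _ (hSfin.mem_toFinset.mpr hc))
    have hge : g i = η * ξ i := by rw [hgdef, hsource i, h0, zero_add]
    rw [Real.norm_eq_abs, hge, abs_mul, abs_of_pos hη] at hgi
    nlinarith [abs_nonneg (ξ i)]
  -- the subspace of sequences supported in J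
  set V : Submodule ℝ ltwo :=
    { carrier := {u : ltwo | ∀ i ∉ J, u i = 0}
      add_mem' := by
        intro a b ha hb i hi
        simp only [lp.coeFn_add, Pi.add_apply, ha i hi, hb i hi, add_zero]
      zero_mem' := by
        intro i hi
        simp only [lp.coeFn_zero, Pi.zero_apply]
      smul_mem' := by
        intro c a ha i hi
        simp only [lp.coeFn_smul, Pi.smul_apply, ha i hi, smul_zero] } with hVdef
  have hVmem : ∀ u : ltwo, u ∈ V ↔ ∀ i ∉ J, u i = 0 := fun u => Iff.rfl
  -- V is finite dimensional
  let π : V →ₗ[ℝ] (J → ℝ) :=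
    { toFun := fun u => fun i => (u : ltwo) i
      map_add' := by
        intro a b
        funext i
        simp only [Submodule.coe_add, lp.coeFn_add, Pi.add_apply]
      map_smul' := by
        intro c a
        funext i
        simp only [Submodule.coe_smul, lp.coeFn_smul, Pi.smul_apply, RingHom.id_apply,
          smul_eq_mul] }
  have hπinj : Function.Injective π := by
    intro a b hab
    apply Subtype.ext
    apply lp.ext
    funext i
    by_cases hiJ : i ∈ J
    · exact congrFun hab ⟨i, hiJ⟩
    · rw [a.2 i hiJ, b.2 i hiJ]
  haveI : FiniteDimensional ℝ V := FiniteDimensional.of_injective π hπinj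
  -- antilipschitz constant from FBI
  let f : V →ₗ[ℝ] H := K.toLinearMap.domRestrict V
  have hfker : LinearMap.ker f = ⊥ := by
    rw [LinearMap.ker_eq_bot]
    intro a b hab
    apply Subtype.ext
    exact hFBI J a.1 b.1 hab a.2 b.2
  obtain ⟨C, hC0, hCanti⟩ := f.exists_antilipschitzWith hfker
  have hCpos : (0:ℝ) < C := hC0
  -- constants
  have hDpos : (0:ℝ) < C * ‖K‖ + 1 := by positivity
  refine ⟨(η/2) / (C * ‖K‖ + 1), by positivity, (η/2) / (C * ‖K‖ + 1) * C + ‖w‖ + 1,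
    by positivity, ?_⟩
  intro x hx
  set h : ltwo := x - xdag with hhdef
  have hhi : ∀ i, h i = x i - xdag i := by
    intro i
    rw [hhdef]
    simp only [lp.coeFn_sub, Pi.sub_apply]
  -- summability facts
  have hsum_x : Summable fun i => |x i| := by
    have := (memℓp_gen_iff (p := 1) (by norm_num)).mp hx
    simpa using this
  have hsum_xd : Summable fun i => |xdag i| := by
    apply summable_of_finite_support
    apply hsparse.subset
    intro i hi
    simp only [Function.mem_support, ne_eq, abs_eq_zero] at hi
    exact hi
  have hsum_habs : Summable fun i => |h i| := by
    apply Summable.of_nonneg_of_le (fun i => abs_nonneg _) _ (hsum_x.add hsum_xd)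
    intro i
    rw [hhi i]
    exact abs_sub _ _ |>.trans_eq rfl
  have hsum_ξh : Summable fun i => ξ i * h i := by
    apply Summable.of_norm_bounded hsum_habs
    intro i
    rw [Real.norm_eq_abs, abs_mul]
    calc |ξ i| * |h i| ≤ 1 * |h i| := mul_le_mul_of_nonneg_right (hξ2 i) (abs_nonneg _)
    _ = |h i| := one_mul _
  have hsum_gh : Summable fun i => g i * h i := by
    have := lp.summable_inner (𝕜 := ℝ) g h
    simpa [RCLike.inner_apply, mul_comm] using this
  -- the slack terms
  set s : ℕ → ℝ := fun i => |x i| - |xdag i| - ξ i * h i with hsdef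
  have hsum_s : Summable s := (hsum_x.sub hsum_xd).sub hsum_ξh
  -- the off-J part of h
  have hufin : {i : ℕ | (fun j => if j ∈ J then h j else 0) i ≠ 0}.Finite := by
    apply J.finite_toSet.subset
    intro i hi
    by_contra hiJ
    exact hi (if_neg (by simpa using hiJ))
  set u : ltwo := ⟨fun j => if j ∈ J then h j else 0,
    (memℓp_zero hufin).of_exponent_ge zero_le⟩ with hudef
  have hui : ∀ i, u i = if i ∈ J then h i else 0 := fun i => rfl
  set v : ltwo := h - u with hvdef
  have hvi : ∀ i, v i = if i ∈ J then 0 else h i := by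
    intro i
    rw [hvdef]
    simp only [lp.coeFn_sub, Pi.sub_apply, hui i]
    by_cases hiJ : i ∈ J <;> simp [hiJ]
  have huV : u ∈ V := by
    intro i hi
    rw [hui i, if_neg hi]
  have hsum_vabs : Summable fun i => |v i| := by
    apply Summable.of_nonneg_of_le (fun i => abs_nonneg _) _ hsum_habs
    intro i
    rw [hvi i]
    by_cases hiJ : i ∈ J <;> simp [hiJ, abs_nonneg]
  -- pointwise slack bound
  have hslack : ∀ i, (1/2) * |v i| ≤ s i := by
    intro i
    have hξx : ξ i * x i ≤ |x i| := by
      calc ξ i * x i ≤ |ξ i * x i| := le_abs_self _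
      _ = |ξ i| * |x i| := abs_mul _ _
      _ ≤ 1 * |x i| := mul_le_mul_of_nonneg_right (hξ2 i) (abs_nonneg _)
      _ = |x i| := one_mul _
    by_cases hiJ : i ∈ J
    · rw [hvi i, if_pos hiJ, abs_zero, mul_zero]
      by_cases hxd : xdag i = 0
      · rw [hsdef]
        simp only
        rw [hhi i, hxd]
        simp only [abs_zero, sub_zero]
        linarith
      · have hsign : ξ i * xdag i = |xdag i| := by
          rw [hξ1 i hxd]
          rcases lt_trichotomy (xdag i) 0 with hlt | heq | hgt
          · rw [Real.sign_of_neg hlt, abs_of_neg hlt]; ring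
          · exact absurd heq hxd
          · rw [Real.sign_of_pos hgt, abs_of_pos hgt]; ring
        rw [hsdef]
        simp only
        rw [hhi i, mul_sub, hsign]
        linarith
    · have hxd : xdag i = 0 := hJ1 i hiJ
      have hξhalf : |ξ i| ≤ 1/2 := hJ2 i hiJ
      have hvx : v i = x i := by
        rw [hvi i, if_neg hiJ, hhi i, hxd, sub_zero]
      have hξx2 : ξ i * x i ≤ (1/2) * |x i| := by
        calc ξ i * x i ≤ |ξ i * x i| := le_abs_self _
        _ = |ξ i| * |x i| := abs_mul _ _
        _ ≤ (1/2) * |x i| := mul_le_mul_of_nonneg_right hξhalf (abs_nonneg _)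
      rw [hvx, hsdef]
      simp only
      rw [hhi i, hxd]
      simp only [abs_zero, sub_zero]
      linarith
  -- lower bound on the slack sum
  have hTslack : (1/2) * ∑' i, |v i| ≤ ∑' i, s i := by
    rw [← tsum_mul_left]
    exact Summable.tsum_le_tsum hslack (hsum_vabs.mul_left _) hsum_s
  -- the energy identity
  have hinner_xdag : (inner ℝ xdag h : ℝ) = ∑' i, xdag i * h i := by
    rw [lp.inner_eq_tsum]
    simp [RCLike.inner_apply, mul_comm]
  have hinner_gh : (inner ℝ g h : ℝ) = ∑' i, g i * h i := by
    rw [lp.inner_eq_tsum]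
    simp [RCLike.inner_apply, mul_comm]
  have hadj : (inner ℝ g h : ℝ) = inner ℝ w (K h) := by
    rw [hgdef]
    exact ContinuousLinearMap.adjoint_inner_left K h w
  have hsum_xdh : Summable fun i => xdag i * h i := by
    apply summable_of_finite_support
    apply hsparse.subset
    intro i hi
    simp only [Function.mem_support, ne_eq] at hi ⊢
    intro hz
    exact hi (by rw [hz, zero_mul])
  have hxdh_eq : (∑' i, xdag i * h i) = (∑' i, g i * h i) - η * ∑' i, ξ i * h i := by
    rw [← tsum_mul_left, ← Summable.tsum_sub hsum_gh (hsum_ξh.mul_left η)]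
    congr 1
    funext i
    have : g i = xdag i + η * ξ i := by rw [hgdef]; exact hsource i
    rw [this]
    ring
  have hnormsq : ‖x‖ ^ 2 = ‖xdag‖ ^ 2 + 2 * (inner ℝ xdag h : ℝ) + ‖h‖ ^ 2 := by
    have hxeq : x = xdag + h := by rw [hhdef]; abel
    rw [hxeq]
    exact norm_add_sq_real xdag h
  have hl1 : l1norm x - l1norm xdag - ∑' i, ξ i * h i = ∑' i, s i := by
    rw [hsdef, l1norm, l1norm, Summable.tsum_sub (hsum_x.sub hsum_xd) hsum_ξh,
      Summable.tsum_sub hsum_x hsum_xd]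
  have hdelta : Rfun η x - Rfun η xdag
      = η * (∑' i, s i) + (inner ℝ w (K h) : ℝ) + (1/2) * ‖h‖ ^ 2 := by
    rw [Rfun, Rfun, hnormsq, hinner_xdag, hxdh_eq, ← hinner_gh, hadj, ← hl1]
    ring
  -- inner product lower bound
  have hinner_ge : -(‖w‖ * ‖K h‖) ≤ (inner ℝ w (K h) : ℝ) := by
    have := abs_real_inner_le_norm w (K h)
    have h2 := neg_abs_le (inner ℝ w (K h) : ℝ)
    linarith
  -- norm estimate via FBI
  have huvnorm : ‖h‖ ≤ ‖u‖ + ‖v‖ := by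
    have : h = u + v := by rw [hvdef]; abel
    rw [this]
    exact norm_add_le _ _
  have hu_le : ‖u‖ ≤ C * ‖K u‖ := by
    have := hCanti.le_mul_dist (⟨u, huV⟩ : V) 0
    simp only [dist_zero_right, map_zero, dist_zero_right] at this
    have hfu : f (⟨u, huV⟩ : V) = K u := rfl
    rw [hfu] at this
    exact this
  have hKu_le : ‖K u‖ ≤ ‖K h‖ + ‖K‖ * ‖v‖ := by
    have hKu : K u = K h - K v := by
      have huv : u = h - v := by rw [hvdef]; abel
      rw [huv, map_sub]
    rw [hKu]
    calc ‖K h - K v‖ ≤ ‖K h‖ + ‖K v‖ := norm_sub_le _ _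
    _ ≤ ‖K h‖ + ‖K‖ * ‖v‖ := by
        have := K.le_opNorm v
        linarith
  have hvl2 : ‖v‖ ≤ ∑' i, |v i| := norm_le_tsum_abs v hsum_vabs
  -- put it together
  have hhbound : ‖h‖ ≤ C * ‖K h‖ + (C * ‖K‖ + 1) * ‖v‖ := by
    have := mul_le_mul_of_nonneg_left hKu_le hCpos.le
    nlinarith [norm_nonneg v]
  have hdelta_ge : (η/2) * ‖v‖ - ‖w‖ * ‖K h‖ ≤ Rfun η x - Rfun η xdag := by
    rw [hdelta]
    have h1 : (η/2) * ‖v‖ ≤ η * (∑' i, s i) := by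
      have h2 : (1/2) * ‖v‖ ≤ ∑' i, s i := by
        calc (1/2) * ‖v‖ ≤ (1/2) * ∑' i, |v i| := by linarith
        _ ≤ ∑' i, s i := hTslack
      nlinarith
    nlinarith [sq_nonneg ‖h‖]
  set c₁ := (η/2) / (C * ‖K‖ + 1) with hc₁
  have hc₁D : c₁ * (C * ‖K‖ + 1) = η/2 := div_mul_cancel₀ _ (ne_of_gt hDpos)
  have hc₁pos : 0 < c₁ := by positivity
  have hmain : c₁ * ‖h‖ - (c₁ * C + ‖w‖ + 1) * ‖K h‖ ≤ Rfun η x - Rfun η xdag := by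
    have h3 : c₁ * ‖h‖ ≤ c₁ * C * ‖K h‖ + (η/2) * ‖v‖ := by
      have h4 : c₁ * ((C * ‖K‖ + 1) * ‖v‖) = (η/2) * ‖v‖ := by rw [← mul_assoc, hc₁D]
      calc c₁ * ‖h‖ ≤ c₁ * (C * ‖K h‖ + (C * ‖K‖ + 1) * ‖v‖) :=
            mul_le_mul_of_nonneg_left hhbound hc₁pos.le
      _ = c₁ * C * ‖K h‖ + c₁ * ((C * ‖K‖ + 1) * ‖v‖) := by ring
      _ = c₁ * C * ‖K h‖ + (η/2) * ‖v‖ := by rw [h4]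
    nlinarith [norm_nonneg (K h)]
  exact hmain
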